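/- arXiv:1602.03905 — 2 statements merged into one kernel-verified Lean document; each statement's English description precedes it below -/
import Mathlib

section
/- Let u(N) be the Lie algebra of skew-Hermitian N×N complex matrices equipped with the inner product ⟨X,Y⟩ = N·Re(trace(X*Y)), and let {X_k} be any orthonormal basis of u(N) with respect to this inner product. Then for every N×N complex matrix C, the sum ∑_k X_k C X_k equals −(1/N)·trace(C)·I, where I is the identity matrix. -/
open scoped BigOperators Matrix

/-- the "magic identity" `∑ₖ Xₖ C Xₖ = -(trace C / N) · I` for an
orthonormal basis `{Xₖ}` of the Lie algebra `u(N)` of skew-Hermitian matrices,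
with inner product `⟨X,Y⟩ = N · Re(trace(X* Y))`. -/
theorem makeenko_migdal_magic_identity
    (N : ℕ) (hN : 0 < N) {ι : Type*} [Fintype ι] [DecidableEq ι]
    (X : ι → Matrix (Fin N) (Fin N) ℂ)
    (hskew : ∀ k, (X k)ᴴ = -(X k))
    (horth : ∀ j k, (N : ℝ) * (((X j)ᴴ * X k).trace).re = if j = k then 1 else 0)
    (hspan : ∀ A : Matrix (Fin N) (Fin N) ℂ, Aᴴ = -A →
      A ∈ Submodule.span ℝ (Set.range X)) :
    ∀ C : Matrix (Fin N) (Fin N) ℂ,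
      ∑ k, X k * C * X k = (-(C.trace / (N : ℂ))) • (1 : Matrix (Fin N) (Fin N) ℂ) := by
  have hNC : (N : ℂ) ≠ 0 := Nat.cast_ne_zero.mpr hN.ne'
  -- trace(X k * A) is real for skew-Hermitian A
  have htreal : ∀ (k : ι) (A : Matrix (Fin N) (Fin N) ℂ), Aᴴ = -A →
      (((X k)ᴴ * A).trace.re : ℂ) = ((X k)ᴴ * A).trace := by
    intro k A hA
    have h1 : star (((X k)ᴴ * A).trace) = ((X k)ᴴ * A).trace := by
      rw [← Matrix.trace_conjTranspose, Matrix.conjTranspose_mul,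
        Matrix.conjTranspose_conjTranspose, hA, hskew k, Matrix.neg_mul, Matrix.neg_mul,
        Matrix.trace_neg, Matrix.trace_neg, neg_inj, Matrix.trace_mul_comm]
    exact Complex.conj_eq_iff_re.mp h1
  -- reproduction formula for skew-Hermitian matrices
  have hrep : ∀ A : Matrix (Fin N) (Fin N) ℂ, Aᴴ = -A →
      A = ∑ k, (-(N : ℂ) * ((X k) * A).trace) • X k := by
    intro A hA
    obtain ⟨c, hc⟩ := Submodule.mem_span_range_iff_exists_fun ℝ |>.mp (hspan A hA)
    have hcoef : ∀ k, (-(N : ℂ) * ((X k) * A).trace) = ((c k : ℝ) : ℂ) := by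
      intro k
      have h1 : (N : ℝ) * (((X k)ᴴ * A).trace).re = c k := by
        have : ((X k)ᴴ * A).trace = ∑ i, c i • ((X k)ᴴ * X i).trace := by
          rw [← hc, Matrix.mul_sum, Matrix.trace_sum]
          congr 1; ext i
          rw [Matrix.mul_smul, Matrix.trace_smul]
        rw [this]
        rw [Complex.re_sum]
        have : ∀ i, (c i • ((X k)ᴴ * X i).trace).re = c i * (((X k)ᴴ * X i).trace).re := by
          intro i
          simp [Complex.smul_re]
        simp_rw [this]
        rw [Finset.mul_sum]
        have : ∀ i ∈ Finset.univ, (N : ℝ) * (c i * (((X k)ᴴ * X i).trace).re)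
            = c i * (if k = i then 1 else 0) := by
          intro i _
          rw [← horth k i]; ring
        rw [Finset.sum_congr rfl this]
        simp
      have h2 : ((X k) * A).trace = -((X k)ᴴ * A).trace := by
        rw [hskew k, Matrix.neg_mul, Matrix.trace_neg, neg_neg]
      rw [h2]
      rw [← h1]
      push_cast
      rw [htreal k A hA]
      ring
    have : ∑ k, (-(N : ℂ) * ((X k) * A).trace) • X k = ∑ k, c k • X k := by
      refine Finset.sum_congr rfl fun k _ => ?_
      rw [hcoef k]
      ext i j
      simp [Matrix.smul_apply, Complex.real_smul]
    rw [this, hc]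
  -- reproduction formula for all matrices, by complex linearity
  have hrepC : ∀ C : Matrix (Fin N) (Fin N) ℂ,
      C = ∑ k, (-(N : ℂ) * ((X k) * C).trace) • X k := by
    intro C
    set A : Matrix (Fin N) (Fin N) ℂ := (2⁻¹ : ℂ) • (C - Cᴴ) with hAdef
    set B : Matrix (Fin N) (Fin N) ℂ := (-(2⁻¹ : ℂ) * Complex.I) • (C + Cᴴ) with hBdef
    have hAskew : Aᴴ = -A := by
      rw [hAdef, Matrix.conjTranspose_smul, Matrix.conjTranspose_sub,
        Matrix.conjTranspose_conjTranspose]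
      rw [show star (2⁻¹ : ℂ) = (2⁻¹ : ℂ) by simp [Complex.ext_iff]]
      rw [← smul_neg, neg_sub]
    have hBskew : Bᴴ = -B := by
      rw [hBdef, Matrix.conjTranspose_smul, Matrix.conjTranspose_add,
        Matrix.conjTranspose_conjTranspose]
      rw [show star (-(2⁻¹ : ℂ) * Complex.I) = -(-(2⁻¹ : ℂ) * Complex.I) by
        simp [Complex.ext_iff]]
      rw [neg_smul, add_comm Cᴴ C]
    have hCAB : C = A + Complex.I • B := by
      ext i j
      simp only [hAdef, hBdef, Matrix.add_apply, Matrix.smul_apply, Matrix.sub_apply,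
        Matrix.conjTranspose_apply, smul_eq_mul]
      ring_nf
      simp [Complex.I_sq]
      ring
    have htr : ∀ k, ((X k) * C).trace = ((X k) * A).trace + Complex.I * ((X k) * B).trace := by
      intro k
      conv_lhs => rw [hCAB]
      rw [Matrix.mul_add, Matrix.mul_smul, Matrix.trace_add, Matrix.trace_smul]
      simp
    calc C = A + Complex.I • B := hCAB
      _ = (∑ k, (-(N : ℂ) * ((X k) * A).trace) • X k)
            + Complex.I • (∑ k, (-(N : ℂ) * ((X k) * B).trace) • X k) := by
          rw [← hrep A hAskew, ← hrep B hBskew]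
      _ = ∑ k, (-(N : ℂ) * ((X k) * C).trace) • X k := by
          rw [Finset.smul_sum, ← Finset.sum_add_distrib]
          congr 1; ext k
          rw [htr k, smul_smul, ← add_smul]
          ring_nf
  -- the T-tensor identity
  have hT : ∀ a b p q : Fin N, ∑ k, (X k) b a * (X k) p q
      = -(1 / (N : ℂ)) * (if a = p ∧ b = q then 1 else 0) := by
    intro a b p q
    have h := hrepC (Matrix.single a b 1)
    have htr : ∀ k, ((X k) * Matrix.single a b 1).trace = (X k) b a := by
      intro k
      simp [Matrix.trace, Matrix.diag, Matrix.mul_apply, Matrix.single,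
        Finset.sum_ite_eq, ite_and]
    have h2 := congrFun (congrFun h p) q
    simp only [Matrix.sum_apply, Matrix.smul_apply, smul_eq_mul] at h2
    have h3 : Matrix.single a b 1 p q = (if a = p ∧ b = q then 1 else 0 : ℂ) := by
      simp [Matrix.single]
    rw [h3] at h2
    simp_rw [htr] at h2
    have h4 : ∑ k, -(N : ℂ) * (X k) b a * (X k) p q
        = -(N : ℂ) * ∑ k, (X k) b a * (X k) p q := by
      rw [Finset.mul_sum]; congr 1; ext k; ring
    rw [h4] at h2
    refine mul_left_cancel₀ (neg_ne_zero.mpr hNC) ?_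
    rw [← h2]
    field_simp
  -- final assembly
  intro C
  ext p q
  simp only [Matrix.sum_apply, Matrix.mul_apply]
  have step1 : ∑ k, ∑ b, (∑ a, (X k) p a * C a b) * (X k) b q
      = ∑ a, ∑ b, C a b * ∑ k, (X k) p a * (X k) b q := by
    calc ∑ k, ∑ b, (∑ a, (X k) p a * C a b) * (X k) b q
        = ∑ k, ∑ b, ∑ a, C a b * ((X k) p a * (X k) b q) := by
          refine Finset.sum_congr rfl fun k _ => Finset.sum_congr rfl fun b _ => ?_
          rw [Finset.sum_mul]
          exact Finset.sum_congr rfl fun a _ => by ring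
      _ = ∑ k, ∑ a, ∑ b, C a b * ((X k) p a * (X k) b q) :=
          Finset.sum_congr rfl fun k _ => Finset.sum_comm
      _ = ∑ a, ∑ k, ∑ b, C a b * ((X k) p a * (X k) b q) := Finset.sum_comm
      _ = ∑ a, ∑ b, ∑ k, C a b * ((X k) p a * (X k) b q) :=
          Finset.sum_congr rfl fun a _ => Finset.sum_comm
      _ = ∑ a, ∑ b, C a b * ∑ k, (X k) p a * (X k) b q := by
          refine Finset.sum_congr rfl fun a _ => Finset.sum_congr rfl fun b _ => ?_
          rw [← Finset.mul_sum]
  rw [step1]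
  have step2 : ∀ a b : Fin N, C a b * (∑ k, (X k) p a * (X k) b q)
      = C a b * (-(1 / (N : ℂ)) * (if a = b ∧ p = q then 1 else 0)) := by
    intro a b
    rw [hT a p b q]
  simp_rw [step2]
  have step3 : ∀ a : Fin N, ∑ b, C a b * (-(1 / (N : ℂ)) * (if a = b ∧ p = q then 1 else 0))
      = if p = q then C a a * (-(1 / (N : ℂ))) else 0 := by
    intro a
    rw [Finset.sum_eq_single a]
    · by_cases hpq : p = q <;> simp [hpq]
    · intro b _ hb
      simp [Ne.symm hb]
    · intro h; exact absurd (Finset.mem_univ a) h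
  simp_rw [step3]
  rw [Finset.sum_ite_irrel]
  by_cases hpq : p = q
  · simp only [hpq, if_true, Matrix.one_apply_eq, smul_eq_mul, mul_one]
    rw [← Finset.sum_mul, Matrix.trace]
    simp [Matrix.diag]
    ring
  · simp [hpq, Matrix.one_apply_ne hpq, Matrix.smul_apply]
end

section
/- Let u(N) carry the inner product ⟨X,Y⟩ = N·trace(X*Y) and let {X_k} be an orthonormal basis of u(N). For any fixed N×N unitary matrices a₁,a₂,a₃,a₄ and any matrices α,β, the identity ∑_k tr(a₃⁻¹ α a₂ X_k a₄⁻¹ β a₁ X_k) = − tr(a₃⁻¹ α a₂)·tr(a₄⁻¹ β a₁) holds, where tr denotes the normalized trace tr(A) = trace(A)/N. -/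
open scoped BigOperators Matrix

lemma mm_trace_std (N : ℕ) (B : Matrix (Fin N) (Fin N) ℂ) (c d : Fin N) (z : ℂ) :
    (Bᴴ * Matrix.single c d z).trace = star (B c d) * z := by
  simp [Matrix.trace, Matrix.diag, Matrix.mul_apply, Matrix.single, ite_and,
    Matrix.conjTranspose_apply]

lemma mm_expand (N : ℕ) {ι : Type*} [Fintype ι] [DecidableEq ι]
    (X : ι → Matrix (Fin N) (Fin N) ℂ)
    (horth : ∀ j k, (N : ℝ) * (((X j)ᴴ * X k).trace).re = if j = k then 1 else 0)
    {A : Matrix (Fin N) (Fin N) ℂ} (hA : A ∈ Submodule.span ℝ (Set.range X)) :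
    A = ∑ k, ((N : ℝ) * (((X k)ᴴ * A).trace).re) • X k := by
  induction hA using Submodule.span_induction with
  | mem x hx =>
      obtain ⟨j, rfl⟩ := hx
      have : ∀ k, ((N : ℝ) * (((X k)ᴴ * X j).trace).re) • X k
          = if k = j then X j else 0 := by
        intro k
        rw [horth k j]
        split <;> simp_all
      simp [this]
  | zero => simp
  | add x y hx hy ihx ihy =>
      calc x + y = (∑ k, ((N : ℝ) * (((X k)ᴴ * x).trace).re) • X k)
            + ∑ k, ((N : ℝ) * (((X k)ᴴ * y).trace).re) • X k := by rw [← ihx, ← ihy]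
        _ = _ := by
            rw [← Finset.sum_add_distrib]
            congr 1; ext k
            rw [Matrix.mul_add, Matrix.trace_add]
            simp [mul_add, add_smul, Complex.add_re]
  | smul r x hx ihx =>
      calc r • x = r • ∑ k, ((N : ℝ) * (((X k)ᴴ * x).trace).re) • X k := by rw [← ihx]
        _ = _ := by
            rw [Finset.smul_sum]
            refine Finset.sum_congr rfl fun k _ => ?_
            rw [Matrix.mul_smul, Matrix.trace_smul, smul_smul]
            congr 1
            have : (r • ((X k)ᴴ * x).trace).re = r * ((X k)ᴴ * x).trace.re := by
              simp [Complex.real_smul, Complex.re_ofReal_mul]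
            rw [this]; ring

lemma mm_key (N : ℕ) (hN : 0 < N) {ι : Type*} [Fintype ι] [DecidableEq ι]
    (X : ι → Matrix (Fin N) (Fin N) ℂ)
    (hskew : ∀ k, (X k)ᴴ = -(X k))
    (horth : ∀ j k, (N : ℝ) * (((X j)ᴴ * X k).trace).re = if j = k then 1 else 0)
    (hspan : ∀ A : Matrix (Fin N) (Fin N) ℂ, Aᴴ = -A →
      A ∈ Submodule.span ℝ (Set.range X))
    (p q r s : Fin N) :
    ∑ k, X k p q * X k r s
      = -((if r = q then (1:ℂ) else 0) * (if s = p then 1 else 0)) / N := by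
  -- skewness at the entry level
  have hsk : ∀ k, X k q p = -star (X k p q) := by
    intro k
    have h := congrFun (congrFun (hskew k) q) p
    simp only [Matrix.conjTranspose_apply, Matrix.neg_apply] at h
    rw [h, neg_neg]
  have hN' : (N : ℂ) ≠ 0 := Nat.cast_ne_zero.mpr hN.ne'
  set A1 : Matrix (Fin N) (Fin N) ℂ :=
    Matrix.single p q 1 - Matrix.single q p 1 with hA1def
  set A2 : Matrix (Fin N) (Fin N) ℂ :=
    Complex.I • (Matrix.single p q 1 + Matrix.single q p 1) with hA2def
  have hct : ∀ c d : Fin N, (Matrix.single c d (1:ℂ))ᴴ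
      = Matrix.single d c 1 := by
    intro c d
    ext i j
    simp [Matrix.conjTranspose_apply, Matrix.single, and_comm]
  have hA1 : A1ᴴ = -A1 := by
    rw [hA1def, Matrix.conjTranspose_sub, hct, hct, neg_sub]
  have hA2 : A2ᴴ = -A2 := by
    rw [hA2def, Matrix.conjTranspose_smul, Matrix.conjTranspose_add, hct, hct,
      Complex.star_def, Complex.conj_I, neg_smul, neg_inj, add_comm]
  -- coefficients
  have key1 : ∀ k, ((N:ℝ) * (((X k)ᴴ * A1).trace).re) = 2*N*(X k p q).re := by
    intro k
    rw [hA1def, Matrix.mul_sub, Matrix.trace_sub, mm_trace_std, mm_trace_std, hsk k]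
    simp [Complex.ext_iff]
    ring
  have key2 : ∀ k, ((N:ℝ) * (((X k)ᴴ * A2).trace).re) = 2*N*(X k p q).im := by
    intro k
    rw [hA2def, Matrix.mul_smul, Matrix.trace_smul, Matrix.mul_add, Matrix.trace_add,
      mm_trace_std, mm_trace_std, hsk k]
    simp [Complex.ext_iff]
    ring
  have h1 := mm_expand N X horth (hspan A1 hA1)
  have h2 := mm_expand N X horth (hspan A2 hA2)
  have e1 := congrFun (congrFun h1 r) s
  have e2 := congrFun (congrFun h2 r) s
  simp only [key1, key2] at e1 e2
  rw [hA1def] at e1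
  rw [hA2def] at e2
  simp only [Matrix.sum_apply, Matrix.smul_apply, Matrix.sub_apply, Matrix.add_apply,
    Matrix.single, Matrix.of_apply, smul_eq_mul, Complex.real_smul] at e1 e2
  have combo : (-2 : ℂ) * ((if r = q then (1:ℂ) else 0) * (if s = p then 1 else 0))
      = (2*(N:ℂ)) * ∑ k, X k p q * X k r s := by
    have lhs1 : ((if p = r ∧ q = s then (1:ℂ) else 0) - (if q = r ∧ p = s then 1 else 0))
        + Complex.I * (Complex.I * ((if p = r ∧ q = s then (1:ℂ) else 0)
            + (if q = r ∧ p = s then 1 else 0)))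
        = (-2 : ℂ) * ((if r = q then (1:ℂ) else 0) * (if s = p then 1 else 0)) := by
      rw [← mul_assoc, Complex.I_mul_I]
      have h1 : (if q = r ∧ p = s then (1:ℂ) else 0)
          = (if r = q then (1:ℂ) else 0) * (if s = p then 1 else 0) := by
        rcases eq_or_ne q r with h | h
        · subst h
          rcases eq_or_ne p s with h' | h'
          · subst h'; simp
          · simp [h', h'.symm]
        · simp [h, h.symm]
      rw [h1]; ring
    rw [← lhs1, e1, e2, Finset.mul_sum, Finset.mul_sum, ← Finset.sum_add_distrib]
    refine Finset.sum_congr rfl fun k _ => ?_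
    have hw := Complex.re_add_im (X k p q)
    push_cast
    linear_combination (2*(N:ℂ) * X k r s) * hw
  rw [eq_div_iff hN']
  linear_combination -combo / 2

lemma mm_magic (N : ℕ) {ι : Type*} [Fintype ι] [DecidableEq ι]
    (X : ι → Matrix (Fin N) (Fin N) ℂ)
    (key : ∀ p q r s : Fin N, ∑ k, X k p q * X k r s
      = -((if r = q then (1:ℂ) else 0) * (if s = p then 1 else 0)) / N)
    (B C : Matrix (Fin N) (Fin N) ℂ) :
    ∑ k, (B * X k * C * X k).trace = -(B.trace * C.trace) / N := by
  have hM : ∑ k, X k * C * X k = (-(C.trace) / N) • (1 : Matrix (Fin N) (Fin N) ℂ) := by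
    ext p s
    rw [Matrix.sum_apply]
    calc ∑ k, (X k * C * X k) p s
        = ∑ k, ∑ r, ∑ q, X k p q * C q r * X k r s := by
          refine Finset.sum_congr rfl fun k _ => ?_
          simp [Matrix.mul_apply, Finset.sum_mul]
      _ = ∑ r, ∑ q, C q r * ∑ k, X k p q * X k r s := by
          rw [Finset.sum_comm]
          refine Finset.sum_congr rfl fun r _ => ?_
          rw [Finset.sum_comm]
          refine Finset.sum_congr rfl fun q _ => ?_
          rw [Finset.mul_sum]
          refine Finset.sum_congr rfl fun k _ => ?_
          ring
      _ = ∑ r, ∑ q, C q r * (-((if r = q then (1:ℂ) else 0) * (if s = p then 1 else 0)) / N) := by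
          simp only [key]
      _ = ((-(C.trace) / N) • (1 : Matrix (Fin N) (Fin N) ℂ)) p s := by
          simp [Matrix.trace, Matrix.diag, Matrix.one_apply, ite_mul, mul_ite,
            Finset.sum_ite_eq, Finset.sum_div, Finset.sum_ite]
          rcases eq_or_ne p s with rfl | h
          · simp [Finset.sum_div, neg_div]
            rw [Finset.sum_comm]
            simp [div_eq_mul_inv, Finset.sum_mul]
          · simp [h, h.symm]
  calc ∑ k, (B * X k * C * X k).trace
      = (B * ∑ k, X k * C * X k).trace := by
        rw [Finset.mul_sum, Matrix.trace_sum]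
        refine Finset.sum_congr rfl fun k _ => ?_
        simp only [mul_assoc]
    _ = -(B.trace * C.trace) / N := by
        rw [hM, Matrix.mul_smul, Matrix.trace_smul, Matrix.mul_one]
        simp [smul_eq_mul]
        ring

/-- for an orthonormal basis `{Xₖ}` of `u(N)` (inner product
`⟨X,Y⟩ = N·trace(X*Y)`), unitary `a₁,a₂,a₃,a₄` and matrices `α, β`,
`∑ₖ tr(a₃⁻¹ α a₂ Xₖ a₄⁻¹ β a₁ Xₖ) = - tr(a₃⁻¹ α a₂) · tr(a₄⁻¹ β a₁)`,
where `tr` is the normalized trace. -/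
theorem makeenko_migdal_trace_identity
    (N : ℕ) (hN : 0 < N) {ι : Type*} [Fintype ι] [DecidableEq ι]
    (X : ι → Matrix (Fin N) (Fin N) ℂ)
    (hskew : ∀ k, (X k)ᴴ = -(X k))
    (horth : ∀ j k, (N : ℝ) * (((X j)ᴴ * X k).trace).re = if j = k then 1 else 0)
    (hspan : ∀ A : Matrix (Fin N) (Fin N) ℂ, Aᴴ = -A →
      A ∈ Submodule.span ℝ (Set.range X))
    (a₁ a₂ a₃ a₄ : Matrix.unitaryGroup (Fin N) ℂ)
    (α β : Matrix (Fin N) (Fin N) ℂ) :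
    ∑ k, (((a₃ : Matrix (Fin N) (Fin N) ℂ))⁻¹ * α * (a₂ : Matrix (Fin N) (Fin N) ℂ)
        * X k * ((a₄ : Matrix (Fin N) (Fin N) ℂ))⁻¹ * β
        * (a₁ : Matrix (Fin N) (Fin N) ℂ) * X k).trace / (N : ℂ)
      = -(((((a₃ : Matrix (Fin N) (Fin N) ℂ))⁻¹ * α
            * (a₂ : Matrix (Fin N) (Fin N) ℂ)).trace / (N : ℂ))
          * ((((a₄ : Matrix (Fin N) (Fin N) ℂ))⁻¹ * β
            * (a₁ : Matrix (Fin N) (Fin N) ℂ)).trace / (N : ℂ))) := by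
  have key := mm_key N hN X hskew horth hspan
  have magic := mm_magic N X key
    (((a₃ : Matrix (Fin N) (Fin N) ℂ))⁻¹ * α * (a₂ : Matrix (Fin N) (Fin N) ℂ))
    (((a₄ : Matrix (Fin N) (Fin N) ℂ))⁻¹ * β * (a₁ : Matrix (Fin N) (Fin N) ℂ))
  rw [← Finset.sum_div]
  simp only [mul_assoc] at magic ⊢
  rw [magic]
  ring
end
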